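/- Fix a time series x ∈ ℝ^k with 1 ≤ k ≤ n, a margin ξ ≥ 0, and an elasticity m ≥ 1. For a negatively labeled example (y = −1), the elastic margin perceptron loss (W, b) ↦ max(0, ξ − y·(b + σ_W(x))) = max(0, ξ + b + σ_W(x)) is a convex function on ℝ^{n×m} × ℝ. -/

import Mathlib

/-- A warping path in the grid `[k] × [m]` (1-based points): starts at `(1,1)`,
ends at `(k,m)`, stays inside the grid, and each step is `(1,0)`, `(0,1)` or `(1,1)`. -/
def IsWarpingPath (k m : ℕ) (φ : List (ℕ × ℕ)) : Prop :=
  φ.head? = some (1, 1) ∧ φ.getLast? = some (k, m) ∧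
  (∀ t ∈ φ, 1 ≤ t.1 ∧ t.1 ≤ k ∧ 1 ≤ t.2 ∧ t.2 ≤ m) ∧
  ∀ (l : ℕ) (h : l + 1 < φ.length),
    ((φ[l + 1]'h).1 = (φ[l]'(Nat.lt_of_succ_lt h)).1 + 1 ∧
       (φ[l + 1]'h).2 = (φ[l]'(Nat.lt_of_succ_lt h)).2) ∨
    ((φ[l + 1]'h).1 = (φ[l]'(Nat.lt_of_succ_lt h)).1 ∧
       (φ[l + 1]'h).2 = (φ[l]'(Nat.lt_of_succ_lt h)).2 + 1) ∨
    ((φ[l + 1]'h).1 = (φ[l]'(Nat.lt_of_succ_lt h)).1 + 1 ∧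
       (φ[l + 1]'h).2 = (φ[l]'(Nat.lt_of_succ_lt h)).2 + 1)

/-- `P(k,m)`: the set of all warping paths in the grid `[k] × [m]`. -/
def WarpingPaths (k m : ℕ) : Set (List (ℕ × ℕ)) := {φ | IsWarpingPath k m φ}

/-- Value of a time series at a (0-based) natural index, `0` out of bounds. -/
def nth {k : ℕ} (x : Fin k → ℝ) (i : ℕ) : ℝ := if h : i < k then x ⟨i, h⟩ else 0

/-- Entry of a matrix at (0-based) natural indices, `0` out of bounds. -/
def entry {n m : ℕ} (W : Fin n → Fin m → ℝ) (i j : ℕ) : ℝ :=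
  if h : i < n ∧ j < m then W ⟨i, h.1⟩ ⟨j, h.2⟩ else 0

/-- Elastic embedding `x ⊗_φ Z` of a time series `x ∈ ℝ^k` (`k ≤ n`) into the
matrix `Z ∈ ℝ^{n×m}` along the warping path `φ` (points of `φ` are 1-based). -/
def embed {n m k : ℕ} (x : Fin k → ℝ) (φ : List (ℕ × ℕ)) (Z : Fin n → Fin m → ℝ) :
    Fin n → Fin m → ℝ :=
  fun i j => if ((i : ℕ) + 1, (j : ℕ) + 1) ∈ φ then nth x i else Z i j

/-- Frobenius inner product on `ℝ^{n×m}`. -/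
def frobInner {n m : ℕ} (X Y : Fin n → Fin m → ℝ) : ℝ := ∑ i, ∑ j, X i j * Y i j

/-- Frobenius norm on `ℝ^{n×m}`. -/
noncomputable def frobNorm {n m : ℕ} (X : Fin n → Fin m → ℝ) : ℝ :=
  Real.sqrt (frobInner X X)

/-- Elastic inner product `σ_W(x) = max_{φ ∈ P(k,m)} ⟨x ⊗_φ 0, W⟩`. -/
noncomputable def elasticIP {n m k : ℕ} (W : Fin n → Fin m → ℝ) (x : Fin k → ℝ) : ℝ :=
  sSup ((fun φ => frobInner (embed x φ (0 : Fin n → Fin m → ℝ)) W) '' WarpingPaths k m)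

/-- Elastic Euclidean distance `δ_Y(x) = min_{φ ∈ P(k,m)} ‖x ⊗_φ Y − Y‖`. -/
noncomputable def elasticDist {n m k : ℕ} (Y : Fin n → Fin m → ℝ) (x : Fin k → ℝ) : ℝ :=
  sInf ((fun φ => frobNorm (embed x φ Y - Y)) '' WarpingPaths k m)

/-- DTW distance `d(x,z) = min_{φ ∈ P(k,m)} sqrt(Σ_{(i,j) ∈ φ} (x_i − z_j)²)`. -/
noncomputable def dtw {k m : ℕ} (x : Fin k → ℝ) (z : Fin m → ℝ) : ℝ :=
  sInf ((fun φ : List (ℕ × ℕ) =>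
      Real.sqrt (∑ t ∈ φ.toFinset, (nth x (t.1 - 1) - nth z (t.2 - 1)) ^ 2)) ''
    WarpingPaths k m)

/-- A canonical warping path: go down the first column, then across the last row. -/
def canonPathFn (k : ℕ) (l : ℕ) : ℕ × ℕ :=
  if l + 1 ≤ k then (l + 1, 1) else (k, l + 2 - k)

lemma canonPath_isWarping (k m : ℕ) (hk : 1 ≤ k) (hm : 1 ≤ m) :
    IsWarpingPath k m (List.ofFn (fun i : Fin (k + m - 1) => canonPathFn k i)) := by
  have hlen : (List.ofFn (fun i : Fin (k + m - 1) => canonPathFn k i)).length = k + m - 1 :=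
    List.length_ofFn
  have hpos : 0 < k + m - 1 := by omega
  have hget : ∀ (l : ℕ) (hl : l < (List.ofFn (fun i : Fin (k + m - 1) => canonPathFn k i)).length),
      (List.ofFn (fun i : Fin (k + m - 1) => canonPathFn k i))[l]'hl = canonPathFn k l := by
    intro l hl
    simp [List.getElem_ofFn]
  refine ⟨?_, ?_, ?_, ?_⟩
  · rw [List.head?_eq_getElem?, List.getElem?_eq_getElem (by omega), hget]
    simp [canonPathFn, hk]
  · rw [List.getLast?_eq_getElem?, List.getElem?_eq_getElem (by omega), hget, hlen]
    unfold canonPathFn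
    split_ifs with h
    · simp only [Option.some.injEq, Prod.mk.injEq, true_and, and_true]
      omega
    · simp only [Option.some.injEq, Prod.mk.injEq, true_and, and_true]
      omega
  · intro t ht
    rw [List.mem_ofFn] at ht
    obtain ⟨⟨l, hl⟩, rfl⟩ := ht
    show 1 ≤ (canonPathFn k l).1 ∧ (canonPathFn k l).1 ≤ k ∧
      1 ≤ (canonPathFn k l).2 ∧ (canonPathFn k l).2 ≤ m
    unfold canonPathFn
    split_ifs with h <;> simp <;> omega
  · intro l h
    rw [hget, hget]
    rw [hlen] at h
    unfold canonPathFn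
    split_ifs with h1 h2 h2
    · left; constructor <;> simp
    · exfalso; omega
    · right; left
      constructor
      · simp; omega
      · simp; omega
    · right; left
      constructor
      · simp
      · simp; omega

lemma warpingPaths_nonempty (k m : ℕ) (hk : 1 ≤ k) (hm : 1 ≤ m) :
    (WarpingPaths k m).Nonempty :=
  ⟨_, canonPath_isWarping k m hk hm⟩

lemma embed_zero_apply {n m k : ℕ} (x : Fin k → ℝ) (φ : List (ℕ × ℕ)) (i : Fin n) (j : Fin m) :
    embed x φ (0 : Fin n → Fin m → ℝ) i j
      = if ((i : ℕ) + 1, (j : ℕ) + 1) ∈ φ then nth x i else 0 := by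
  simp [embed]

lemma frobInner_le_bound {n m k : ℕ} (x : Fin k → ℝ) (φ : List (ℕ × ℕ))
    (W : Fin n → Fin m → ℝ) :
    frobInner (embed x φ (0 : Fin n → Fin m → ℝ)) W ≤ ∑ i : Fin n, ∑ j : Fin m, |nth x (i : ℕ)| * |W i j| := by
  unfold frobInner
  refine Finset.sum_le_sum fun i _ => Finset.sum_le_sum fun j _ => ?_
  rw [embed_zero_apply]
  split_ifs with h
  · calc nth x (i : ℕ) * W i j ≤ |nth x (i : ℕ) * W i j| := le_abs_self _
      _ = |nth x (i : ℕ)| * |W i j| := abs_mul _ _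
  · rw [zero_mul]; positivity

lemma elasticIP_bddAbove {n m k : ℕ} (x : Fin k → ℝ) (W : Fin n → Fin m → ℝ) :
    BddAbove ((fun φ => frobInner (embed x φ (0 : Fin n → Fin m → ℝ)) W) '' WarpingPaths k m) := by
  refine ⟨∑ i : Fin n, ∑ j : Fin m, |nth x (i : ℕ)| * |W i j|, ?_⟩
  rintro y ⟨φ, _, rfl⟩
  exact frobInner_le_bound x φ W

lemma frobInner_smul_add {n m : ℕ} (M : Fin n → Fin m → ℝ) (a b : ℝ)
    (W V : Fin n → Fin m → ℝ) :
    frobInner M (a • W + b • V) = a * frobInner M W + b * frobInner M V := by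
  unfold frobInner
  simp only [Pi.add_apply, Pi.smul_apply, smul_eq_mul, Finset.mul_sum,
    ← Finset.sum_add_distrib]
  refine Finset.sum_congr rfl fun i _ => Finset.sum_congr rfl fun j _ => by ring

lemma elasticIP_convex {n m k : ℕ} (hk : 1 ≤ k) (hm : 1 ≤ m) (x : Fin k → ℝ)
    (W V : Fin n → Fin m → ℝ) (a b : ℝ) (ha : 0 ≤ a) (hb : 0 ≤ b) :
    elasticIP (a • W + b • V) x ≤ a * elasticIP W x + b * elasticIP V x := by
  unfold elasticIP
  apply csSup_le ((warpingPaths_nonempty k m hk hm).image _)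
  rintro y ⟨φ, hφ, rfl⟩
  show frobInner (embed x φ 0) (a • W + b • V) ≤ _
  rw [frobInner_smul_add]
  gcongr
  · exact le_csSup (elasticIP_bddAbove x W) ⟨φ, hφ, rfl⟩
  · exact le_csSup (elasticIP_bddAbove x V) ⟨φ, hφ, rfl⟩

/-- For a negatively labeled example (`y = −1`), the elastic margin
perceptron loss `(W, b) ↦ max(0, ξ − y·(b + σ_W(x))) = max(0, ξ + b + σ_W(x))` is
convex on `ℝ^{n×m} × ℝ`. -/
theorem elastic_margin_loss_convex_of_neg_label (n m k : ℕ) (hk1 : 1 ≤ k) (hkn : k ≤ n)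
    (hm : 1 ≤ m) (x : Fin k → ℝ) (ξ : ℝ) (hξ : 0 ≤ ξ) :
    ConvexOn ℝ Set.univ (fun p : (Fin n → Fin m → ℝ) × ℝ =>
      max 0 (ξ - (-1 : ℝ) * (p.2 + elasticIP p.1 x))) := by
  have key : ConvexOn ℝ Set.univ (fun p : (Fin n → Fin m → ℝ) × ℝ =>
      ξ - (-1 : ℝ) * (p.2 + elasticIP p.1 x)) := by
    refine ⟨convex_univ, fun p _ q _ a b ha hb hab => ?_⟩
    simp only [smul_eq_mul, neg_one_mul, sub_neg_eq_add, Prod.smul_fst, Prod.smul_snd,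
      Prod.fst_add, Prod.snd_add, smul_eq_mul]
    have h1 := elasticIP_convex hk1 hm x p.1 q.1 a b ha hb
    nlinarith [h1]
  have h0 : ConvexOn ℝ Set.univ (fun _ : (Fin n → Fin m → ℝ) × ℝ => (0 : ℝ)) :=
    convexOn_const 0 convex_univ
  have := h0.sup key
  simpa [Pi.sup_def] using this
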